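/- For any two rank-one orthogonal projections P and Q on ℂ², there exists a rank-one orthogonal projection R on ℂ² such that ‖P - R‖ = ‖Q - R‖ = sin(π/4) = 1/√2. -/

import Mathlib

noncomputable section

/-- An effect on a complex Hilbert space: a positive operator below the identity. -/
def IsEffect {H : Type*} [NormedAddCommGroup H] [InnerProductSpace ℂ H] [CompleteSpace H]
    (A : H →L[ℂ] H) : Prop :=
  A.IsPositive ∧ ((1 : H →L[ℂ] H) - A).IsPositive

/-- Effects `A`, `B` are coexistent: there are effects `M ≤ A`, `N ≤ I - A` with `M + N = B`. -/
def Coexistent {H : Type*} [NormedAddCommGroup H] [InnerProductSpace ℂ H] [CompleteSpace H]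
    (A B : H →L[ℂ] H) : Prop :=
  ∃ M N : H →L[ℂ] H, IsEffect M ∧ IsEffect N ∧
    (A - M).IsPositive ∧ (((1 : H →L[ℂ] H) - A) - N).IsPositive ∧ M + N = B

/-- A rank-one orthogonal projection. -/
def IsRankOneProjection {H : Type*} [NormedAddCommGroup H] [InnerProductSpace ℂ H]
    [CompleteSpace H] (P : H →L[ℂ] H) : Prop :=
  IsSelfAdjoint P ∧ P ∘L P = P ∧ Module.finrank ℂ (LinearMap.range (P : H →ₗ[ℂ] H)) = 1

/-- The strength function `Λ(B,P) = sup {λ ≥ 0 : λP ≤ B}`. -/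
def strength {H : Type*} [NormedAddCommGroup H] [InnerProductSpace ℂ H] [CompleteSpace H]
    (B P : H →L[ℂ] H) : ℝ :=
  sSup {l : ℝ | 0 ≤ l ∧ (B - (l : ℂ) • P).IsPositive}

abbrev E2 := EuclideanSpace ℂ (Fin 2)

local notation "⟪" x ", " y "⟫" => @inner ℂ E2 _ x y

lemma inner_self_one {v : E2} (hv : ‖v‖ = 1) : ⟪v, v⟫ = 1 := by
  rw [inner_self_eq_norm_sq_to_K, hv]; norm_num

lemma span_pair_top {u v : E2} (hu : ‖u‖ = 1) (hv : ‖v‖ = 1)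
    (h : ⟪v,u⟫ * ⟪u,v⟫ ≠ 1) : Submodule.span ℂ {u, v} = ⊤ := by
  have hli : LinearIndependent ℂ ![u, v] := by
    rw [LinearIndependent.pair_iff]
    intro s t hst
    have h1 : ⟪u, s • u + t • v⟫ = 0 := by rw [hst, inner_zero_right]
    have h2 : ⟪v, s • u + t • v⟫ = 0 := by rw [hst, inner_zero_right]
    simp only [inner_add_right, inner_smul_right, inner_self_one hu, inner_self_one hv,
      mul_one] at h1 h2
    have ht : t * (1 - ⟪v,u⟫ * ⟪u,v⟫) = 0 := by linear_combination h2 - ⟪v,u⟫ * h1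
    have ht0 : t = 0 := by
      rcases mul_eq_zero.mp ht with h' | h'
      · exact h'
      · exact absurd (by linear_combination -h') h
    refine ⟨?_, ht0⟩
    rw [ht0] at h1; simpa using h1
  have hr : Set.range ![u, v] = {u, v} := by
    simp [Matrix.range_cons, Matrix.range_empty, Set.pair_comm]
  apply Submodule.eq_top_of_finrank_eq
  rw [← hr, finrank_span_eq_card hli]
  simp

def rkOne (v : E2) : E2 →L[ℂ] E2 := (innerSL ℂ v).smulRight v
lemma rkOne_apply (v x : E2) : rkOne v x = ⟪v, x⟫ • v := rfl

lemma rkOne_selfAdjoint {v : E2} : IsSelfAdjoint (rkOne v) := by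
  rw [ContinuousLinearMap.isSelfAdjoint_iff_isSymmetric]
  intro x y
  simp [rkOne_apply, inner_smul_left, inner_smul_right, inner_conj_symm, mul_comm]

lemma norm_sub_rkOne {u v : E2} (hu : ‖u‖ = 1) (hv : ‖v‖ = 1)
    (hc : ⟪v,u⟫ * ⟪u,v⟫ = 1/2) : ‖rkOne u - rkOne v‖ = Real.sqrt 2 / 2 := by
  set A := rkOne u - rkOne v with hA
  have hAu : A u = u - ⟪v,u⟫ • v := by
    simp [hA, rkOne_apply, inner_self_one hu, hu]
  have hAv : A v = ⟪u,v⟫ • u - v := by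
    simp [hA, rkOne_apply, inner_self_one hv, hv]
  have hsp : Submodule.span ℂ {u, v} = ⊤ :=
    span_pair_top hu hv (by rw [hc]; norm_num)
  have hA2 : A ∘L A = ((1/2 : ℂ)) • 1 := by
    apply ContinuousLinearMap.coe_injective
    apply LinearMap.ext_on hsp
    rintro x (rfl | rfl)
    · show A (A x) = (1/2 : ℂ) • x
      rw [hAu, map_sub, map_smul, hAu, hAv, smul_sub, smul_smul, hc]
      module
    · show A (A x) = (1/2 : ℂ) • x
      rw [hAv, map_sub, map_smul, hAu, hAv, smul_sub, smul_smul,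
        show ⟪u,x⟫ * ⟪x,u⟫ = 1/2 by linear_combination hc]
      module
  have hsa : IsSelfAdjoint A := by
    rw [ContinuousLinearMap.isSelfAdjoint_iff_isSymmetric]
    intro x y
    have h1 := ContinuousLinearMap.isSelfAdjoint_iff_isSymmetric.mp (rkOne_selfAdjoint (v := u)) x y
    have h2 := ContinuousLinearMap.isSelfAdjoint_iff_isSymmetric.mp (rkOne_selfAdjoint (v := v)) x y
    rw [show ((A : E2 →ₗ[ℂ] E2) x) = rkOne u x - rkOne v x from rfl,
      show ((A : E2 →ₗ[ℂ] E2) y) = rkOne u y - rkOne v y from rfl,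
      inner_sub_left, inner_sub_right]
    exact congrArg₂ Sub.sub h1 h2
  have hnn : ‖A‖ * ‖A‖ = 1/2 := by
    rw [← CStarRing.norm_star_mul_self, hsa.star_eq]
    have : A * A = A ∘L A := rfl
    rw [this, hA2, norm_smul ((1:ℂ)/2) (1 : E2 →L[ℂ] E2), ContinuousLinearMap.one_def,
      ContinuousLinearMap.norm_id]
    simp
  have h2 : Real.sqrt 2 * Real.sqrt 2 = 2 := Real.mul_self_sqrt (by norm_num)
  nlinarith [norm_nonneg A, Real.sqrt_nonneg 2, sq_nonneg (‖A‖ - Real.sqrt 2 / 2)]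

lemma rkOne_isRankOneProjection {v : E2} (hv : ‖v‖ = 1) : IsRankOneProjection (rkOne v) := by
  have hv0 : v ≠ 0 := by intro h; rw [h] at hv; simp at hv
  refine ⟨?_, ?_, ?_⟩
  · rw [ContinuousLinearMap.isSelfAdjoint_iff_isSymmetric]
    intro x y
    simp [rkOne_apply, inner_smul_left, inner_smul_right, inner_conj_symm, mul_comm]
  · ext x
    simp [rkOne_apply, inner_smul_right, inner_self_one hv, smul_smul, hv]
  · have hrange : LinearMap.range ((rkOne v : E2 →L[ℂ] E2) : E2 →ₗ[ℂ] E2) = ℂ ∙ v := by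
      apply le_antisymm
      · rintro _ ⟨x, rfl⟩
        exact Submodule.smul_mem _ _ (Submodule.mem_span_singleton_self v)
      · rw [Submodule.span_singleton_le_iff_mem]
        exact ⟨v, by simp [rkOne_apply, inner_self_one hv, hv]⟩
    rw [hrange]
    exact finrank_span_singleton hv0

lemma exists_unit_vector {P : E2 →L[ℂ] E2} (hP : IsRankOneProjection P) :
    ∃ u : E2, ‖u‖ = 1 ∧ ∀ x, P x = ⟪u, x⟫ • u := by
  obtain ⟨hsa, hidem, hrk⟩ := hP
  obtain ⟨v, hv0, hspan⟩ := (finrank_eq_one_iff' ).mp hrk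
  have hvne : (v : E2) ≠ 0 := fun h => hv0 (Subtype.ext h)
  set u : E2 := ((‖(v : E2)‖ : ℂ))⁻¹ • (v : E2) with hu
  have hun : ‖u‖ = 1 := by
    rw [hu, norm_smul, norm_inv]
    simp only [Complex.norm_real, norm_norm]
    exact inv_mul_cancel₀ (norm_ne_zero_iff.mpr hvne)
  refine ⟨u, hun, fun x => ?_⟩
  -- u ∈ range
  have humem : u ∈ LinearMap.range ((P : E2 →L[ℂ] E2) : E2 →ₗ[ℂ] E2) :=
    Submodule.smul_mem _ _ v.2
  have hPu : P u = u := by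
    obtain ⟨y, hy⟩ := humem
    have h2 : P (P y) = P y := by
      have := ContinuousLinearMap.ext_iff.mp hidem y
      simpa using this
    have hy' : P y = u := hy
    rwa [hy'] at h2
  -- P x ∈ range, so P x = c • u for some c
  have hPx : ∃ c : ℂ, P x = c • u := by
    have hmem : P x ∈ LinearMap.range ((P : E2 →L[ℂ] E2) : E2 →ₗ[ℂ] E2) := ⟨x, rfl⟩
    obtain ⟨c, hc⟩ := hspan ⟨P x, hmem⟩
    refine ⟨c * (‖(v : E2)‖ : ℂ), ?_⟩
    have h3 := congrArg (Subtype.val) hc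
    simp only [Submodule.coe_smul] at h3
    rw [← h3, hu, smul_smul, mul_assoc,
      mul_inv_cancel₀ (by exact_mod_cast norm_ne_zero_iff.mpr hvne : (‖(v : E2)‖ : ℂ) ≠ 0), mul_one]
  obtain ⟨c, hc⟩ := hPx
  have hinner : ⟪u, P x⟫ = c := by
    rw [hc, inner_smul_right, inner_self_one hun, mul_one]
  have hsym : ⟪u, P x⟫ = ⟪u, x⟫ := by
    have h1 : ⟪P u, x⟫ = ⟪u, P x⟫ := by
      rw [← ContinuousLinearMap.adjoint_inner_left, hsa.adjoint_eq]
    rw [← h1, hPu]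
  rw [hc, ← hinner, hsym]

lemma norm_one_of_inner_self {v : E2} (h : ⟪v, v⟫ = 1) : ‖v‖ = 1 := by
  have h2 : ((‖v‖ : ℂ))^2 = 1 := by
    have h2 := inner_self_eq_norm_sq_to_K (𝕜 := ℂ) (E := E2) v
    rw [h] at h2
    exact h2.symm
  have h3 : ‖v‖^2 = 1 := by exact_mod_cast h2
  nlinarith [norm_nonneg v]

lemma exists_mid (u w : E2) (hu : ‖u‖ = 1) (hw : ‖w‖ = 1) :
    ∃ v : E2, ‖v‖ = 1 ∧ ⟪v,u⟫ * ⟪u,v⟫ = 1/2 ∧ ⟪v,w⟫ * ⟪w,v⟫ = 1/2 := by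
  have hu0 : u ≠ 0 := by intro h; rw [h] at hu; simp at hu
  -- find unit u' orthogonal to u
  obtain ⟨y, hymem, hy0⟩ := Submodule.ne_bot_iff _ |>.mp (by
    rw [Ne, Submodule.orthogonal_eq_bot_iff]
    intro htop
    have h2 : Module.finrank ℂ (ℂ ∙ u) = 1 := finrank_span_singleton hu0
    rw [htop, finrank_top] at h2
    simp at h2 : ((ℂ ∙ u)ᗮ ≠ ⊥))
  set u' : E2 := ((‖y‖ : ℂ))⁻¹ • y with hu'def
  have hyn : (‖y‖ : ℂ) ≠ 0 := by exact_mod_cast norm_ne_zero_iff.mpr hy0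
  have hu' : ‖u'‖ = 1 := by
    rw [hu'def, norm_smul, norm_inv]
    simp only [Complex.norm_real, norm_norm]
    exact inv_mul_cancel₀ (norm_ne_zero_iff.mpr hy0)
  have horth : ⟪u, u'⟫ = 0 := by
    rw [hu'def, inner_smul_right,
      Submodule.mem_orthogonal_singleton_iff_inner_right.mp hymem, mul_zero]
  have horth' : ⟪u', u⟫ = 0 := by rw [← inner_conj_symm, horth, map_zero]
  set a : ℂ := ⟪u, w⟫ with ha
  set b : ℂ := ⟪u', w⟫ with hb
  -- expansion of w
  have hsp : Submodule.span ℂ {u, u'} = ⊤ :=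
    span_pair_top hu hu' (by rw [horth]; simp)
  have hd : w - a • u - b • u' = 0 := by
    have hmem : w - a • u - b • u' ∈ (Submodule.span ℂ {u, u'})ᗮ := by
      rw [Submodule.mem_orthogonal]
      intro x hx
      induction hx using Submodule.span_induction with
      | mem x hx =>
        rcases hx with rfl | rfl
        · simp [inner_sub_right, inner_smul_right, inner_self_one hu, horth, ha, hu]
        · simp [inner_sub_right, inner_smul_right, inner_self_one hu', horth', hb, hu']
      | zero => simp
      | add x z _ _ h1 h2 => simp [inner_add_left, h1, h2]
      | smul c x _ h1 => simp [inner_smul_left, h1]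
    rw [hsp, Submodule.top_orthogonal_eq_bot] at hmem
    simpa using hmem
  have hwexp : w = a • u + b • u' := by
    rw [sub_sub, sub_eq_zero] at hd
    exact hd
  -- |a|^2 + |b|^2 = 1
  have habs : (starRingEnd ℂ) a * a + (starRingEnd ℂ) b * b = 1 := by
    have h1 : ⟪w, w⟫ = 1 := inner_self_one hw
    nth_rewrite 1 [hwexp] at h1
    nth_rewrite 1 [hwexp] at h1
    simp only [inner_add_left, inner_add_right, inner_smul_left, inner_smul_right,
      inner_self_one hu, inner_self_one hu', horth, horth'] at h1
    linear_combination h1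
  -- choose phase z
  obtain ⟨z, hz1, hz2⟩ : ∃ z : ℂ, (starRingEnd ℂ) z * z = 1 ∧
      (starRingEnd ℂ) a * b * (starRingEnd ℂ) z + a * (starRingEnd ℂ) b * z = 0 := by
    by_cases hab : (starRingEnd ℂ) a * b = 0
    · refine ⟨1, by simp, ?_⟩
      have : a * (starRingEnd ℂ) b = 0 := by
        rcases mul_eq_zero.mp hab with h | h
        · simp [show a = 0 by simpa using congrArg (starRingEnd ℂ) h]
        · simp [h]
      simp [hab, this]
    · set c : ℂ := (starRingEnd ℂ) a * b with hc
      have hcn : (‖c‖ : ℂ) ≠ 0 := by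
        exact_mod_cast norm_ne_zero_iff.mpr hab
      refine ⟨Complex.I * c * (‖c‖ : ℂ)⁻¹, ?_, ?_⟩
      · have hkey : (starRingEnd ℂ) c * c = ((‖c‖ : ℂ))^2 := by
          rw [Complex.conj_mul']
        have hstep : (starRingEnd ℂ) (Complex.I * c * (‖c‖ : ℂ)⁻¹) * (Complex.I * c * (‖c‖ : ℂ)⁻¹)
            = ((starRingEnd ℂ) c * c) * (((‖c‖ : ℂ))^2)⁻¹ := by
          rw [map_mul, map_mul, Complex.conj_I, map_inv₀, Complex.conj_ofReal]
          field_simp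
          rw [sq, Complex.I_mul_I]
          ring
        rw [hstep, hkey, mul_inv_cancel₀ (pow_ne_zero 2 hcn)]
      · have hcc : a * (starRingEnd ℂ) b = (starRingEnd ℂ) c := by
          simp [hc, map_mul]
        rw [hcc]
        simp only [map_mul, Complex.conj_I, map_inv₀, Complex.conj_ofReal]
        ring
  -- define v
  set s : ℂ := ((Real.sqrt 2 : ℝ) : ℂ)⁻¹ with hs
  have hs2 : s * s = 1/2 := by
    rw [hs, ← mul_inv]
    norm_cast
    rw [Real.mul_self_sqrt (by norm_num)]
    norm_num
  have hscon : (starRingEnd ℂ) s = s := by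
    rw [hs, map_inv₀, Complex.conj_ofReal]
  refine ⟨s • (u + z • u'), ?_, ?_, ?_⟩
  · apply norm_one_of_inner_self
    simp only [inner_smul_left, inner_smul_right, inner_add_left, inner_add_right,
      inner_self_one hu, inner_self_one hu', horth, horth', hscon]
    linear_combination ((1:ℂ)/2) * hz1 + (1 + (starRingEnd ℂ) z * z) * hs2
  · simp only [inner_smul_left, inner_smul_right, inner_add_left, inner_add_right,
      inner_self_one hu, horth, horth', hscon]
    linear_combination hs2
  · have hwu : ⟪w, u⟫ = (starRingEnd ℂ) a := by rw [ha, inner_conj_symm]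
    have hwu' : ⟪w, u'⟫ = (starRingEnd ℂ) b := by rw [hb, inner_conj_symm]
    simp only [inner_smul_left, inner_smul_right, inner_add_left, inner_add_right,
      hwu, hwu', hscon, ← ha, ← hb]
    linear_combination (s*s) * hz2 + (s*s*((starRingEnd ℂ) b)*b) * hz1 + (s*s) * habs + hs2

theorem exists_rankOneProjection_equidistant (P Q : E2 →L[ℂ] E2)
    (hP : IsRankOneProjection P) (hQ : IsRankOneProjection Q) :
    ∃ R : E2 →L[ℂ] E2, IsRankOneProjection R ∧
      ‖P - R‖ = Real.sin (Real.pi / 4) ∧ ‖Q - R‖ = Real.sin (Real.pi / 4) ∧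
      Real.sin (Real.pi / 4) = 1 / Real.sqrt 2 := by
  obtain ⟨u, hu, hPu⟩ := exists_unit_vector hP
  obtain ⟨w, hw, hQw⟩ := exists_unit_vector hQ
  obtain ⟨v, hv, hvu, hvw⟩ := exists_mid u w hu hw
  have hPeq : P = rkOne u := by ext1 x; rw [hPu x, rkOne_apply]
  have hQeq : Q = rkOne w := by ext1 x; rw [hQw x, rkOne_apply]
  refine ⟨rkOne v, rkOne_isRankOneProjection hv, ?_, ?_, ?_⟩
  · rw [hPeq, Real.sin_pi_div_four]
    exact norm_sub_rkOne hu hv hvu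
  · rw [hQeq, Real.sin_pi_div_four]
    exact norm_sub_rkOne hw hv hvw
  · have h2 : Real.sqrt 2 * Real.sqrt 2 = 2 := Real.mul_self_sqrt (by norm_num)
    have hpos : (0:ℝ) < Real.sqrt 2 := Real.sqrt_pos.mpr (by norm_num)
    rw [Real.sin_pi_div_four]
    field_simp
    exact Real.sq_sqrt (by norm_num)
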